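/- arXiv:0805.4575 — 3 statements merged into one kernel-verified Lean document; each statement's English description precedes it below -/
import Mathlib

section
/- Let μ, ν ∈ Y. Then ν ≤_G μ if and only if ν ≤_H μ. -/
/-!
Common setup: an abstract reduced irreducible crystallographic root system `R`
inside a real inner product space `E`, with simple roots `α i` (`i : ι`) forming
a basis of `E`, Weyl group generated by the reflections in the roots
(equivalently, by the simple reflections), coroot pairing
`⟨x, a∨⟩ = 2 (x, a) / (a, a)`, weight lattice `P(R)`, root lattices `Q(R)`,
`Q(R_J)`, etc.
-/

open scoped BigOperators

noncomputable section

/-- the pairing `⟨x, a∨⟩ = 2 (x, a)/(a, a)` of `x` with the coroot of `a`. -/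
def pairR {E : Type} [NormedAddCommGroup E] [InnerProductSpace ℝ E] (x a : E) : ℝ :=
  2 * (inner ℝ x a : ℝ) / (inner ℝ a a : ℝ)

/-- the reflection in (the hyperplane orthogonal to) `a`. -/
def reflFun {E : Type} [NormedAddCommGroup E] [InnerProductSpace ℝ E] (a : E) (x : E) : E :=
  x - pairR x a • a

/-- A reduced irreducible crystallographic root system in a real inner product
space `E`, whose set of simple roots `simple : ι → E` is a basis of `E`. -/
structure RootSystemCtx (ι E : Type) [Fintype ι] [DecidableEq ι]
    [NormedAddCommGroup E] [InnerProductSpace ℝ E] : Type where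
  Roots : Set E
  simple : ι → E
  simple_mem : ∀ i, simple i ∈ Roots
  finite : Roots.Finite
  ne_zero : ∀ a ∈ Roots, a ≠ 0
  reduced : ∀ a ∈ Roots, ∀ t : ℝ, t • a ∈ Roots → t = 1 ∨ t = -1
  crystal : ∀ a ∈ Roots, ∀ b ∈ Roots, ∃ n : ℤ, pairR a b = (n : ℝ)
  refl_stable : ∀ a ∈ Roots, ∀ b ∈ Roots, reflFun b a ∈ Roots
  indep : LinearIndependent ℝ simple
  span_top : Submodule.span ℝ (Set.range simple) = ⊤
  pos_neg : ∀ a ∈ Roots, (∃ c : ι → ℕ, a = ∑ i, (c i : ℝ) • simple i) ∨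
      (∃ c : ι → ℕ, a = -∑ i, (c i : ℝ) • simple i)
  irred : ∀ R1 R2 : Set E, Roots = R1 ∪ R2 →
      (∀ a ∈ R1, ∀ b ∈ R2, (inner ℝ a b : ℝ) = 0) → R1 = ∅ ∨ R2 = ∅

namespace RootSystemCtx

variable {ι E : Type} [Fintype ι] [DecidableEq ι]
  [NormedAddCommGroup E] [InnerProductSpace ℝ E]
variable (S : RootSystemCtx ι E)

/-- `R` is simply laced: `⟨a, b∨⟩ ∈ {-1, 0, 1}` for roots `b ≠ ± a`. -/
def SimplyLaced : Prop :=
  ∀ a ∈ S.Roots, ∀ b ∈ S.Roots, b ≠ a → b ≠ -a →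
    pairR a b = -1 ∨ pairR a b = 0 ∨ pairR a b = 1

/-- membership in the weight lattice `P(R)`. -/
def IsWeight (x : E) : Prop := ∀ a ∈ S.Roots, ∃ n : ℤ, pairR x a = (n : ℝ)

/-- `x` is dominant: `⟨x, αᵢ∨⟩ ≥ 0` for all simple roots. -/
def IsDominant (x : E) : Prop := ∀ i, 0 ≤ pairR x (S.simple i)

/-- positive roots: roots that are nonnegative combinations of simple roots. -/
def IsPositiveRoot (a : E) : Prop :=
  a ∈ S.Roots ∧ ∃ c : ι → ℕ, a = ∑ i, (c i : ℝ) • S.simple i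

/-- the root lattice `Q(R)`. -/
def rootLattice : AddSubgroup E := AddSubgroup.closure S.Roots

/-- the root lattice `Q(R_J)` of the sub-root system `R_J`. -/
def rootLatticeJ (J : Finset ι) : AddSubgroup E :=
  AddSubgroup.closure (S.simple '' ↑J)

/-- the sub-root system `R_J` determined by the simple roots `α_j`, `j ∈ J`. -/
def RootsJ (J : Finset ι) : Set E :=
  {a | a ∈ S.Roots ∧ a ∈ Submodule.span ℝ (S.simple '' ↑J)}

/-- `x` is `J`-dominant. -/
def IsJDominant (J : Finset ι) (x : E) : Prop := ∀ j ∈ J, 0 ≤ pairR x (S.simple j)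

/-- `x` is `J`-minuscule: `⟨x, a∨⟩ ∈ {-1,0,1}` for all `a ∈ R_J`. -/
def IsJMinuscule (J : Finset ι) (x : E) : Prop :=
  ∀ a ∈ S.RootsJ J, pairR x a = -1 ∨ pairR x a = 0 ∨ pairR x a = 1

/-- the action of a word `[i₁, …, i_t]` of simple reflections:
`s_{i₁} ∘ ⋯ ∘ s_{i_t}`. -/
def wordAct (l : List ι) : E → E :=
  l.foldr (fun i f => reflFun (S.simple i) ∘ f) id

/-- membership in the Weyl group `W` (generated by the simple reflections). -/
def InWeyl (w : E → E) : Prop := ∃ l : List ι, S.wordAct l = w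

/-- the Weyl group orbit `W x`. -/
def weylOrbit (x : E) : Set E := {y | ∃ l : List ι, y = S.wordAct l x}

/-- a word is reduced if no shorter word gives the same Weyl group element. -/
def IsReducedWord (l : List ι) : Prop :=
  ∀ l' : List ι, S.wordAct l' = S.wordAct l → l.length ≤ l'.length

/-- `w ∈ W` is `λ`-minuscule: some (equivalently, any) reduced expression
`w = s_{i₁} ⋯ s_{i_t}` satisfies
`⟨s_{i_{r+1}} ⋯ s_{i_t} λ, α_{i_r}∨⟩ = -1` for all `1 ≤ r ≤ t`. -/
def IsMinusculeFor (lam : E) (w : E → E) : Prop :=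
  ∃ l : List ι, S.wordAct l = w ∧ S.IsReducedWord l ∧
    ∀ r : Fin l.length,
      pairR (S.wordAct (l.drop (r + 1)) lam) (S.simple (l.get r)) = -1

/-- the basis of simple roots. -/
def simpleBasis : Module.Basis ι ℝ E := Module.Basis.mk S.indep S.span_top.ge

/-- `⟨x, ωᵢ⟩`: the pairing with the fundamental coweight `ωᵢ` dual to `αᵢ`,
i.e. the `i`-th coordinate of `x` in the basis of simple roots. -/
def coweightPair (x : E) (i : ι) : ℝ := S.simpleBasis.repr x i

end RootSystemCtx

/-!
Folding setup: `X` is the cocharacter lattice of a split adjoint group with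
(simply-laced) root system `R` = `S.Roots`; since `E` is self-dual via the
inner product, coroots live in `E` and the pairing `⟨α, x⟩` of a root with a
cocharacter is the inner product. `θ` is a finite-order linear isometry of `E`
preserving `X` and permuting the simple coroots (via a permutation `π` of the
index set), such that distinct roots in the same `⟨θ⟩`-orbit of a simple root
are orthogonal. `Y = X^θ`, and the simple coroots of the folded system `H` are
the orbit sums `N(α∨)`, for `α` in a set `ℛ` of orbit representatives. The
Weyl group `W_H` of `H` is identified with the subgroup of `θ`-fixed elements
of `W`, i.e. those `w ∈ W` commuting with `θ`.
-/

/-- the coroot `a∨ = 2a/(a,a)` of `a`. -/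
def corootOf {E : Type} [NormedAddCommGroup E] [InnerProductSpace ℝ E] (a : E) : E :=
  (2 / (inner ℝ a a : ℝ)) • a

/-- the orbit of `i` under the permutation `π` (i.e. under `⟨θ⟩`). -/
def orbitOf {ι : Type} (π : Equiv.Perm ι) (i : ι) : Set ι := {j | ∃ k : ℕ, (π ^ k) i = j}

/-- `N(α∨) = ∑_{γ ∈ ⟨θ⟩-orbit of α} γ∨`, a simple coroot of the folded system. -/
def Ncoroot {ι E : Type} [Fintype ι] [DecidableEq ι]
    [NormedAddCommGroup E] [InnerProductSpace ℝ E]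
    (S : RootSystemCtx ι E) (π : Equiv.Perm ι) (i : ι) : E :=
  ∑ᶠ j ∈ orbitOf π i, corootOf (S.simple j)
/-- (folding) Let `μ, ν ∈ Y = X^θ`. Then `ν ≤_G μ`
(`μ - ν` is a nonnegative integral combination of the simple coroots `α∨`,
`α ∈ Δ`) if and only if `ν ≤_H μ` (`μ - ν` is a nonnegative integral
combination of the folded simple coroots `N(α∨)`, `α ∈ ℛ`). -/
theorem leG_iff_leH
    {ι E : Type} [Fintype ι] [DecidableEq ι]
    [NormedAddCommGroup E] [InnerProductSpace ℝ E]
    (S : RootSystemCtx ι E) (hSL : S.SimplyLaced)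
    (X : AddSubgroup E)
    (hXcor : ∀ a ∈ S.Roots, corootOf a ∈ X)
    (hXint : ∀ a ∈ S.Roots, ∀ x ∈ X, ∃ m : ℤ, (inner ℝ a x : ℝ) = m)
    (θ : E ≃ₗᵢ[ℝ] E) (n : ℕ) (hn : 0 < n) (hθn : θ ^ n = 1)
    (hθX : ∀ x ∈ X, θ x ∈ X)
    (π : Equiv.Perm ι) (hθsimple : ∀ i, θ (S.simple i) = S.simple (π i))
    (horth : ∀ i : ι, ∀ k : ℕ, S.simple ((π ^ k) i) ≠ S.simple i →
      (inner ℝ (S.simple i) (S.simple ((π ^ k) i)) : ℝ) = 0)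
    (ℛ : Finset ι) (hℛ : ∀ j : ι, ∃! i, i ∈ ℛ ∧ j ∈ orbitOf π i)
    (μ : E) (hμX : μ ∈ X) (hμθ : θ μ = μ)
    (ν : E) (hνX : ν ∈ X) (hνθ : θ ν = ν) :
    (∃ c : ι → ℕ, μ - ν = ∑ i, (c i : ℝ) • corootOf (S.simple i)) ↔
      ∃ d : ι → ℕ, μ - ν = ∑ i ∈ ℛ, (d i : ℝ) • Ncoroot S π i := by
  classical
  choose rep hrepR hrepO using fun j : ι => (hℛ j).exists
  have hrep_unique : ∀ j i, i ∈ ℛ → j ∈ orbitOf π i → rep j = i := by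
    intro j i hi hj
    obtain ⟨i', -, hu⟩ := hℛ j
    rw [hu (rep j) ⟨hrepR j, hrepO j⟩, hu i ⟨hi, hj⟩]
  have hself : ∀ i ∈ ℛ, rep i = i := fun i hi =>
    hrep_unique i i hi ⟨0, by simp⟩
  have hfiber : ∀ i ∈ ℛ, orbitOf π i = ↑(Finset.univ.filter fun j => rep j = i) := by
    intro i hi
    ext j
    simp only [Finset.coe_filter, Finset.mem_univ, true_and, Set.mem_setOf_eq]
    constructor
    · intro hj; exact hrep_unique j i hi hj
    · intro hj; exact hj ▸ hrepO j
  have hN : ∀ i ∈ ℛ, Ncoroot S π i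
      = ∑ j ∈ Finset.univ.filter (fun j => rep j = i), corootOf (S.simple j) := by
    intro i hi
    rw [Ncoroot, hfiber i hi, finsum_mem_coe_finset]
  have hsum : ∀ c : ι → ℕ, (∀ j, c j = c (rep j)) →
      ∑ j, (c j : ℝ) • corootOf (S.simple j) = ∑ i ∈ ℛ, (c i : ℝ) • Ncoroot S π i := by
    intro c hc
    rw [← Finset.sum_fiberwise_of_maps_to (g := rep) (fun j _ => hrepR j)]
    refine Finset.sum_congr rfl fun i hi => ?_
    rw [hN i hi, Finset.smul_sum]
    refine Finset.sum_congr rfl fun j hj => ?_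
    simp only [Finset.mem_filter] at hj
    rw [hc j, hj.2]
  have hne : ∀ i, (inner ℝ (S.simple i) (S.simple i) : ℝ) ≠ 0 := fun i =>
    inner_self_ne_zero.mpr (S.indep.ne_zero i)
  have ht : ∀ i, (2 / (inner ℝ (S.simple i) (S.simple i) : ℝ)) ≠ 0 := fun i =>
    div_ne_zero two_ne_zero (hne i)
  constructor
  · rintro ⟨c, hcsum⟩
    have hθcor : ∀ i, θ (corootOf (S.simple i)) = corootOf (S.simple (π i)) := by
      intro i
      unfold corootOf
      rw [map_smul, hθsimple i]
      congr 2
      rw [← hθsimple i, LinearIsometryEquiv.inner_map_map]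
    have hinv : θ (μ - ν) = μ - ν := by rw [map_sub, hμθ, hνθ]
    have key : ∑ i, (c i : ℝ) • corootOf (S.simple (π i))
        = ∑ i, (c i : ℝ) • corootOf (S.simple i) := by
      calc ∑ i, (c i : ℝ) • corootOf (S.simple (π i))
          = θ (∑ i, (c i : ℝ) • corootOf (S.simple i)) := by
            rw [map_sum]; exact Finset.sum_congr rfl fun i _ => by rw [map_smul, hθcor]
        _ = ∑ i, (c i : ℝ) • corootOf (S.simple i) := by rw [← hcsum, hinv, hcsum]
    have hre : ∑ i, (c i : ℝ) • corootOf (S.simple (π i))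
        = ∑ i, (c (π⁻¹ i) : ℝ) • corootOf (S.simple i) := by
      rw [← Equiv.sum_comp π (fun i => (c (π⁻¹ i) : ℝ) • corootOf (S.simple i))]
      simp
    have hcoef : ∀ i, c (π⁻¹ i) = c i := by
      intro i
      have h0 : ∑ j, (((c (π⁻¹ j) : ℝ) - (c j : ℝ)) * (2 / (inner ℝ (S.simple j) (S.simple j) : ℝ)))
          • S.simple j = 0 := by
        have : ∑ j, (c (π⁻¹ j) : ℝ) • corootOf (S.simple j)
            - ∑ j, (c j : ℝ) • corootOf (S.simple j) = 0 := by
          rw [← hre, key, sub_self]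
        rw [← Finset.sum_sub_distrib] at this
        rw [← this]
        refine Finset.sum_congr rfl fun j _ => ?_
        rw [corootOf, smul_smul, smul_smul, ← sub_smul, sub_mul]
      have := Fintype.linearIndependent_iff.mp S.indep _ h0 i
      have hsub : (c (π⁻¹ i) : ℝ) - (c i : ℝ) = 0 := by
        rcases mul_eq_zero.mp this with h | h
        · exact h
        · exact absurd h (ht i)
      exact_mod_cast sub_eq_zero.mp hsub
    have hcπ : ∀ i, c (π i) = c i := by
      intro i
      have := hcoef (π i)
      simpa using this.symm
    have hck : ∀ k : ℕ, ∀ j, c ((π ^ k) j) = c j := by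
      intro k
      induction k with
      | zero => intro j; simp
      | succ m ih =>
        intro j
        have : (π ^ (m + 1)) j = (π ^ m) (π j) := by
          rw [pow_succ, Equiv.Perm.mul_apply]
        rw [this, ih, hcπ]
    have hconst : ∀ j, c j = c (rep j) := by
      intro j
      obtain ⟨k, hk⟩ := hrepO j
      conv_lhs => rw [← hk]
      rw [hck]
    exact ⟨c, by rw [hcsum, hsum c hconst]⟩
  · rintro ⟨d, hdsum⟩
    refine ⟨fun j => d (rep j), ?_⟩
    have hc : ∀ j, d (rep j) = d (rep (rep j)) := by
      intro j; rw [hself (rep j) (hrepR j)]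
    rw [hdsum, hsum (fun j => d (rep j)) hc]
    exact (Finset.sum_congr rfl fun i hi => by rw [hself i hi]).symm
end
end

section
/- Let μ ∈ Y be G-dominant. Define 𝒫(G, μ) := {ν ∈ X : ν_{G-dom} ≤_G μ}, where ν_{G-dom} is the unique G-dominant element of the W-orbit of ν, and 𝒫(H, μ) := {ν ∈ Y : ν_{H-dom} ≤_H μ}, where ν_{H-dom} is the unique H-dominant element of the W_H-orbit of ν. Then 𝒫(H, μ) = Y ∩ 𝒫(G, μ). -/
/-!
Common setup: an abstract reduced irreducible crystallographic root system `R`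
inside a real inner product space `E`, with simple roots `α i` (`i : ι`) forming
a basis of `E`, Weyl group generated by the reflections in the roots
(equivalently, by the simple reflections), coroot pairing
`⟨x, a∨⟩ = 2 (x, a) / (a, a)`, weight lattice `P(R)`, root lattices `Q(R)`,
`Q(R_J)`, etc.
-/

open scoped BigOperators

noncomputable section

open scoped RealInnerProductSpace

section Aux
variable {ι E : Type} [Fintype ι] [DecidableEq ι]
  [NormedAddCommGroup E] [InnerProductSpace ℝ E]

lemma pairR_def (x a : E) : pairR x a = 2 * ⟪x, a⟫ / ⟪a, a⟫ := rfl

lemma pairR_add_left (x y a : E) : pairR (x + y) a = pairR x a + pairR y a := by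
  simp [pairR, inner_add_left]; ring

lemma pairR_sub_left (x y a : E) : pairR (x - y) a = pairR x a - pairR y a := by
  simp [pairR, inner_sub_left]; ring

lemma pairR_smul_left (c : ℝ) (x a : E) : pairR (c • x) a = c * pairR x a := by
  simp [pairR, real_inner_smul_left]; ring

lemma pairR_self (a : E) (ha : ⟪a, a⟫ ≠ 0) : pairR a a = 2 := by
  rw [pairR, mul_div_assoc, div_self ha, mul_one]

lemma pairR_nonneg_iff (x a : E) (ha : (0:ℝ) < ⟪a, a⟫) :
    0 ≤ pairR x a ↔ 0 ≤ ⟪a, x⟫ := by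
  rw [pairR, ← real_inner_comm x a]
  constructor
  · intro h
    by_contra hc
    push_neg at hc
    have : 2 * ⟪a, x⟫ / ⟪a, a⟫ < 0 := div_neg_of_neg_of_pos (by linarith) ha
    linarith
  · intro h
    exact div_nonneg (by linarith) ha.le

lemma pairR_neg_iff (x a : E) (ha : (0:ℝ) < ⟪a, a⟫) :
    pairR x a < 0 ↔ ⟪a, x⟫ < 0 := by
  rw [← not_le, ← not_le, pairR_nonneg_iff x a ha]

lemma reflFun_def (a x : E) : reflFun a x = x - pairR x a • a := rfl

lemma reflFun_add (a x y : E) : reflFun a (x + y) = reflFun a x + reflFun a y := by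
  simp [reflFun, pairR_add_left]; module

lemma reflFun_smul (a : E) (c : ℝ) (x : E) : reflFun a (c • x) = c • reflFun a x := by
  simp [reflFun, pairR_smul_left, smul_sub, smul_smul]

lemma reflFun_inner (a : E) (ha : ⟪a, a⟫ ≠ 0) (x y : E) :
    ⟪reflFun a x, reflFun a y⟫ = ⟪x, y⟫ := by
  simp only [reflFun, pairR, inner_sub_left, inner_sub_right, real_inner_smul_left,
    real_inner_smul_right]
  field_simp
  rw [real_inner_comm y a]
  ring

lemma pairR_reflFun (a : E) (ha : ⟪a, a⟫ ≠ 0) (x y : E) :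
    pairR (reflFun a x) (reflFun a y) = pairR x y := by
  rw [pairR, pairR, reflFun_inner a ha, reflFun_inner a ha]

lemma reflFun_invol (a : E) (ha : ⟪a, a⟫ ≠ 0) (x : E) :
    reflFun a (reflFun a x) = x := by
  have hp : pairR (reflFun a x) a = - pairR x a := by
    rw [reflFun_def, pairR_sub_left, pairR_smul_left, pairR_self a ha]
    ring
  rw [reflFun_def (a := a) (x := reflFun a x), hp, reflFun_def]
  module

lemma reflFun_fixed (a x : E) (h : ⟪x, a⟫ = 0) : reflFun a x = x := by
  simp [reflFun, pairR, h]

end Aux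
section Aux2
variable {ι E : Type} [Fintype ι] [DecidableEq ι]
  [NormedAddCommGroup E] [InnerProductSpace ℝ E] (S : RootSystemCtx ι E)

lemma inner_self_pos' {a : E} (ha : a ≠ 0) : (0:ℝ) < ⟪a, a⟫ :=
  lt_of_le_of_ne real_inner_self_nonneg (Ne.symm (inner_self_ne_zero.2 ha))

lemma simple_inner_pos (i : ι) : (0:ℝ) < ⟪S.simple i, S.simple i⟫ :=
  inner_self_pos' (S.ne_zero _ (S.simple_mem i))

lemma simple_inner_ne (i : ι) : (⟪S.simple i, S.simple i⟫ : ℝ) ≠ 0 :=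
  (simple_inner_pos S i).ne'

lemma root_inner_pos {a : E} (ha : a ∈ S.Roots) : (0:ℝ) < ⟪a, a⟫ :=
  inner_self_pos' (S.ne_zero _ ha)

lemma wordAct_nil : S.wordAct [] = id := rfl

lemma wordAct_cons (i : ι) (l : List ι) :
    S.wordAct (i :: l) = reflFun (S.simple i) ∘ S.wordAct l := rfl

lemma wordAct_append (l₁ l₂ : List ι) :
    S.wordAct (l₁ ++ l₂) = S.wordAct l₁ ∘ S.wordAct l₂ := by
  induction l₁ with
  | nil => rfl
  | cons i t ih => simp [wordAct_cons, ih, Function.comp_assoc]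

lemma wordAct_add (l : List ι) (x y : E) :
    S.wordAct l (x + y) = S.wordAct l x + S.wordAct l y := by
  induction l with
  | nil => rfl
  | cons i t ih => simp [wordAct_cons, ih, reflFun_add]

lemma wordAct_smul (l : List ι) (c : ℝ) (x : E) :
    S.wordAct l (c • x) = c • S.wordAct l x := by
  induction l with
  | nil => rfl
  | cons i t ih => simp [wordAct_cons, ih, reflFun_smul]

lemma wordAct_neg (l : List ι) (x : E) : S.wordAct l (-x) = - S.wordAct l x := by
  have := wordAct_smul S l (-1) x
  simpa using this

lemma wordAct_sub (l : List ι) (x y : E) :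
    S.wordAct l (x - y) = S.wordAct l x - S.wordAct l y := by
  rw [sub_eq_add_neg, sub_eq_add_neg, wordAct_add, wordAct_neg]

lemma wordAct_sum (l : List ι) (f : ι → E) (t : Finset ι) :
    S.wordAct l (∑ i ∈ t, f i) = ∑ i ∈ t, S.wordAct l (f i) := by
  classical
  induction t using Finset.induction with
  | empty => simp [wordAct_smul S l 0 0 |>.symm]; rw [show (0:E) = (0:ℝ) • (0:E) by simp, wordAct_smul]; simp
  | insert _ _ h ih => rw [Finset.sum_insert h, Finset.sum_insert h, wordAct_add, ih]

lemma wordAct_inner (l : List ι) (x y : E) :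
    ⟪S.wordAct l x, S.wordAct l y⟫ = ⟪x, y⟫ := by
  induction l with
  | nil => rfl
  | cons i t ih =>
    simp only [wordAct_cons, Function.comp_apply]
    rw [reflFun_inner _ (simple_inner_ne S i), ih]

lemma wordAct_pairR (l : List ι) (x y : E) :
    pairR (S.wordAct l x) (S.wordAct l y) = pairR x y := by
  rw [pairR, pairR, wordAct_inner, wordAct_inner]

lemma wordAct_mem_roots (l : List ι) {a : E} (ha : a ∈ S.Roots) :
    S.wordAct l a ∈ S.Roots := by
  induction l with
  | nil => exact ha
  | cons i t ih =>
    exact S.refl_stable _ ih _ (S.simple_mem i)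

lemma wordAct_reflFun (l : List ι) (a x : E) :
    S.wordAct l (reflFun a x) = reflFun (S.wordAct l a) (S.wordAct l x) := by
  rw [reflFun_def, reflFun_def, wordAct_sub, wordAct_smul, wordAct_pairR]

lemma wordAct_reverse (l : List ι) (x : E) :
    S.wordAct l.reverse (S.wordAct l x) = x := by
  induction l generalizing x with
  | nil => rfl
  | cons i t ih =>
    simp only [List.reverse_cons, wordAct_append, wordAct_cons, Function.comp_apply]
    show S.wordAct t.reverse (S.wordAct [i] (reflFun (S.simple i) (S.wordAct t x))) = x
    have : S.wordAct [i] (reflFun (S.simple i) (S.wordAct t x))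
        = reflFun (S.simple i) (reflFun (S.simple i) (S.wordAct t x)) := rfl
    rw [this, reflFun_invol _ (simple_inner_ne S i), ih]

lemma wordAct_reverse' (l : List ι) (x : E) :
    S.wordAct l (S.wordAct l.reverse x) = x := by
  have := wordAct_reverse S l.reverse x
  rwa [List.reverse_reverse] at this

lemma neg_mem_roots {a : E} (ha : a ∈ S.Roots) : -a ∈ S.Roots := by
  have h := S.refl_stable a ha a ha
  have : reflFun a a = -a := by
    rw [reflFun_def, pairR_self a (root_inner_pos S ha).ne']
    module
  rwa [this] at h

end Aux2
section Aux3
variable {ι E : Type} [Fintype ι] [DecidableEq ι]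
  [NormedAddCommGroup E] [InnerProductSpace ℝ E] (S : RootSystemCtx ι E)

/-- positivity: nonneg-integer combination of simple roots -/
def IsPos (a : E) : Prop := ∃ c : ι → ℕ, a = ∑ i, (c i : ℝ) • S.simple i

def IsNeg (a : E) : Prop := ∃ c : ι → ℕ, a = -∑ i, (c i : ℝ) • S.simple i

lemma coeff_unique {a b : ι → ℝ}
    (h : ∑ i, a i • S.simple i = ∑ i, b i • S.simple i) : a = b := by
  have h0 : ∑ i, (a i - b i) • S.simple i = 0 := by
    simp only [sub_smul, Finset.sum_sub_distrib, h, sub_self]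
  have h1 := Fintype.linearIndependent_iff.1 S.indep (fun i => a i - b i) h0
  funext i
  have h2 : a i - b i = 0 := by simpa using h1 i
  linarith

lemma simple_injective : Function.Injective S.simple :=
  LinearIndependent.injective S.indep

lemma isPos_simple (j : ι) : IsPos S (S.simple j) := by
  refine ⟨fun i => if i = j then 1 else 0, ?_⟩
  rw [Finset.sum_eq_single j]
  · simp
  · intro b _ hb; simp [hb]
  · intro h; exact absurd (Finset.mem_univ j) h

lemma not_pos_and_neg {a : E} (ha : a ∈ S.Roots) (h1 : IsPos S a) (h2 : IsNeg S a) :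
    False := by
  obtain ⟨c, hc⟩ := h1
  obtain ⟨d, hd⟩ := h2
  have hsum : ∑ i, ((c i : ℝ) + (d i : ℝ)) • S.simple i = ∑ i, (0:ℝ) • S.simple i := by
    simp only [add_smul, Finset.sum_add_distrib]
    rw [← hc]
    simp only [zero_smul, Finset.sum_const_zero]
    have : ∑ i, (d i : ℝ) • S.simple i = -a := by rw [hd]; simp
    rw [this]; simp
  have := congrFun (coeff_unique S hsum)
  have hc0 : ∀ i, c i = 0 := by
    intro i
    have h3 := this i
    have h1 : (0:ℝ) ≤ (c i : ℝ) := Nat.cast_nonneg _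
    have h2 : (0:ℝ) ≤ (d i : ℝ) := Nat.cast_nonneg _
    have h4 : (c i : ℝ) = 0 := by linarith
    exact_mod_cast h4
  apply S.ne_zero a ha
  rw [hc]
  apply Finset.sum_eq_zero
  intro i _
  rw [hc0 i]; simp

lemma root_pos_or_neg {a : E} (ha : a ∈ S.Roots) : IsPos S a ∨ IsNeg S a :=
  S.pos_neg a ha

/-- if a root has a positive real coefficient in the simple basis, it is positive -/
lemma pos_of_coeff_pos {a : E} (ha : a ∈ S.Roots) (f : ι → ℝ)
    (hf : a = ∑ i, f i • S.simple i) {k : ι} (hk : 0 < f k) : IsPos S a := by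
  rcases root_pos_or_neg S ha with h | h
  · exact h
  · exfalso
    obtain ⟨d, hd⟩ := h
    have : ∑ i, f i • S.simple i = ∑ i, (-(d i : ℝ)) • S.simple i := by
      rw [← hf, hd]
      simp [Finset.sum_neg_distrib]
    have := congrFun (coeff_unique S this) k
    have : (0:ℝ) ≤ d k := Nat.cast_nonneg _
    linarith [congrFun (coeff_unique S ‹∑ i, f i • S.simple i = ∑ i, (-(d i : ℝ)) • S.simple i›) k]

lemma coeff_nonneg_of_pos {a : E} (h : IsPos S a) (f : ι → ℝ)
    (hf : a = ∑ i, f i • S.simple i) (k : ι) : 0 ≤ f k := by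
  obtain ⟨c, hc⟩ := h
  have : f = fun i => (c i : ℝ) := coeff_unique S (by rw [← hf, hc])
  rw [congrFun this k]
  exact Nat.cast_nonneg _

lemma isNeg_of_not_isPos {a : E} (ha : a ∈ S.Roots) (h : ¬ IsPos S a) : IsNeg S a :=
  (root_pos_or_neg S ha).resolve_left h

lemma isNeg_neg_of_isPos {a : E} (h : IsPos S a) : IsNeg S (-a) := by
  obtain ⟨c, hc⟩ := h
  exact ⟨c, by rw [hc]⟩

/-- distinct simple roots have nonpositive inner product (simply-laced case) -/
lemma simple_inner_nonpos (hSL : S.SimplyLaced) {i j : ι} (hij : j ≠ i) :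
    ⟪S.simple j, S.simple i⟫ ≤ 0 := by
  by_contra hpos
  push_neg at hpos
  have hne1 : S.simple i ≠ S.simple j := fun h => hij (simple_injective S h).symm
  have hne2 : S.simple i ≠ -S.simple j := by
    intro h
    have : S.simple i + S.simple j = 0 := by rw [h]; simp
    have hsum : ∑ k, (((if k = i then 1 else 0) + if k = j then 1 else 0 : ℝ)) • S.simple k
        = ∑ k, (0:ℝ) • S.simple k := by
      simp only [add_smul, Finset.sum_add_distrib, zero_smul, Finset.sum_const_zero,
        ite_smul, one_smul]
      rw [Finset.sum_ite_eq' Finset.univ i (fun k => S.simple k),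
          Finset.sum_ite_eq' Finset.univ j (fun k => S.simple k)]
      simp [this]
    have := congrFun (coeff_unique S hsum) i
    simp [hij.symm] at this
  have h3 := hSL (S.simple j) (S.simple_mem j) (S.simple i) (S.simple_mem i) hne1 hne2
  have hp : 0 < pairR (S.simple j) (S.simple i) := by
    rw [pairR]
    exact div_pos (by linarith) (simple_inner_pos S i)
  have hp1 : pairR (S.simple j) (S.simple i) = 1 := by
    rcases h3 with h | h | h <;> first | linarith | exact h
  -- then α_j - α_i is a root with mixed-sign coefficients
  have hroot : S.simple j - S.simple i ∈ S.Roots := by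
    have := S.refl_stable (S.simple j) (S.simple_mem j) (S.simple i) (S.simple_mem i)
    rwa [reflFun_def, hp1, one_smul] at this
  set f : ι → ℝ := fun k => (if k = j then 1 else 0) - (if k = i then 1 else 0) with hfdef
  have hfe : S.simple j - S.simple i = ∑ k, f k • S.simple k := by
    simp only [hfdef, sub_smul, Finset.sum_sub_distrib, ite_smul, one_smul, zero_smul]
    rw [Finset.sum_ite_eq' Finset.univ j (fun k => S.simple k),
        Finset.sum_ite_eq' Finset.univ i (fun k => S.simple k)]
    simp
  have hjpos : IsPos S (S.simple j - S.simple i) := by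
    apply pos_of_coeff_pos S hroot f hfe (k := j)
    simp [hfdef, hij]
  have := coeff_nonneg_of_pos S hjpos f hfe i
  simp [hfdef, hij.symm] at this
  linarith

/-- key: a simple reflection permutes the positive roots other than its own -/
lemma reflFun_pos_of_pos {β : E} (i : ι) (hβR : β ∈ S.Roots) (hβ : IsPos S β)
    (hne : β ≠ S.simple i) :
    IsPos S (reflFun (S.simple i) β) := by
  obtain ⟨c, hc⟩ := hβ
  have hmem : reflFun (S.simple i) β ∈ S.Roots := S.refl_stable β hβR _ (S.simple_mem i)
  -- find k ≠ i with c k ≥ 1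
  by_cases hall : ∀ k, k ≠ i → c k = 0
  · exfalso
    have : β = (c i : ℝ) • S.simple i := by
      rw [hc, Finset.sum_eq_single i]
      · intro b _ hb; rw [hall b hb]; simp
      · intro h; exact absurd (Finset.mem_univ i) h
    have hr := S.reduced (S.simple i) (S.simple_mem i) (c i : ℝ) (by rwa [← this])
    rcases hr with h | h
    · apply hne; rw [this, h, one_smul]
    · have : (0:ℝ) ≤ (c i : ℝ) := Nat.cast_nonneg _
      rw [h] at this; linarith
  · push_neg at hall
    obtain ⟨k, hki, hk⟩ := hall
    set p := pairR β (S.simple i) with hp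
    set f : ι → ℝ := fun m => (c m : ℝ) - (if m = i then p else 0) with hfdef
    have hfe : reflFun (S.simple i) β = ∑ m, f m • S.simple m := by
      simp only [reflFun_def, hfdef, sub_smul, Finset.sum_sub_distrib, ← hc, ite_smul, zero_smul]
      rw [Finset.sum_ite_eq' Finset.univ i (fun m => p • S.simple m)]
      simp
      rfl
    apply pos_of_coeff_pos S hmem f hfe (k := k)
    have hfk : f k = (c k : ℝ) := by simp [hfdef, hki]
    rw [hfk]
    exact_mod_cast Nat.pos_of_ne_zero hk

end Aux3
section Aux4
variable {ι E : Type} [Fintype ι] [DecidableEq ι]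
  [NormedAddCommGroup E] [InnerProductSpace ℝ E] (S : RootSystemCtx ι E)

/-- Key lemma: if `w(α_j) < 0` then the word for `w ∘ s_j` can be shortened. -/
lemma key_shorten : ∀ l : List ι, ∀ j : ι, IsNeg S (S.wordAct l (S.simple j)) →
    ∃ l' : List ι, l'.length + 1 = l.length ∧
      S.wordAct l' = S.wordAct l ∘ reflFun (S.simple j) := by
  intro l
  induction l with
  | nil =>
    intro j hneg
    exfalso
    exact not_pos_and_neg S (S.simple_mem j) (isPos_simple S j) hneg
  | cons i t ih =>
    intro j hneg
    by_cases hcase : IsPos S (S.wordAct t (S.simple j))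
    · -- then s_i (w_t α_j) < 0 forces w_t α_j = α_i
      have hmem : S.wordAct t (S.simple j) ∈ S.Roots :=
        wordAct_mem_roots S t (S.simple_mem j)
      have heq : S.wordAct t (S.simple j) = S.simple i := by
        by_contra hne
        have := reflFun_pos_of_pos S i hmem hcase hne
        exact not_pos_and_neg S
          (S.refl_stable _ hmem _ (S.simple_mem i))
          this (by rwa [wordAct_cons, Function.comp_apply] at hneg)
      -- w_t ∘ s_j = s_i ∘ w_t, hence wordAct (i :: t) ∘ s_j = wordAct t
      refine ⟨t, by simp, ?_⟩
      funext x
      have h1 : S.wordAct t (reflFun (S.simple j) x)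
          = reflFun (S.simple i) (S.wordAct t x) := by
        rw [wordAct_reflFun, heq]
      have h2 : S.wordAct (i :: t) (reflFun (S.simple j) x)
          = reflFun (S.simple i) (S.wordAct t (reflFun (S.simple j) x)) := rfl
      simp only [Function.comp_apply, h2, h1, reflFun_invol _ (simple_inner_ne S i)]
    · have hneg' : IsNeg S (S.wordAct t (S.simple j)) :=
        isNeg_of_not_isPos S (wordAct_mem_roots S t (S.simple_mem j)) hcase
      obtain ⟨t', ht'len, ht'⟩ := ih j hneg'
      refine ⟨i :: t', by simp [← ht'len], ?_⟩
      funext x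
      simp only [wordAct_cons, Function.comp_apply, ht']

/-- if every simple root is sent to a positive root, the word acts as identity -/
lemma all_pos_id : ∀ L : ℕ, ∀ l : List ι, l.length ≤ L →
    (∀ j, IsPos S (S.wordAct l (S.simple j))) → ∀ x, S.wordAct l x = x := by
  intro L
  induction L with
  | zero =>
    intro l hl _ x
    rw [List.length_eq_zero_iff.1 (Nat.le_zero.1 hl)]
    rfl
  | succ L ih =>
    intro l hl hpos x
    match l with
    | [] => rfl
    | i :: t =>
      by_cases hall : ∀ j, IsPos S (S.wordAct t (S.simple j))
      · -- then wordAct t = id, so wordAct l = s_i, contradicting hpos at i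
        exfalso
        have hid : ∀ y, S.wordAct t y = y :=
          ih t (by simp only [List.length_cons] at hl; omega) hall
        have : S.wordAct (i :: t) (S.simple i) = -S.simple i := by
          rw [wordAct_cons, Function.comp_apply, hid, reflFun_def,
            pairR_self _ (simple_inner_ne S i)]
          module
        have hneg : IsNeg S (S.wordAct (i :: t) (S.simple i)) := by
          rw [this]
          exact isNeg_neg_of_isPos S (isPos_simple S i)
        exact not_pos_and_neg S
          (wordAct_mem_roots S (i :: t) (S.simple_mem i)) (hpos i) hneg
      · push_neg at hall
        obtain ⟨j, hj⟩ := hall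
        have hneg : IsNeg S (S.wordAct t (S.simple j)) :=
          isNeg_of_not_isPos S (wordAct_mem_roots S t (S.simple_mem j)) hj
        obtain ⟨l₂, hl₂len, hl₂⟩ := key_shorten S t j hneg
        -- wordAct (i :: l₂) = wordAct (i::t) ∘ s_j
        have hw : S.wordAct (i :: l₂) = S.wordAct (i :: t) ∘ reflFun (S.simple j) := by
          funext y
          simp only [wordAct_cons, Function.comp_apply, hl₂]
        -- (wordAct (i::t) ∘ s_j) α_j = - wordAct (i::t) α_j is negative
        have hneg2 : IsNeg S (S.wordAct (i :: l₂) (S.simple j)) := by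
          rw [hw]
          have : reflFun (S.simple j) (S.simple j) = -S.simple j := by
            rw [reflFun_def, pairR_self _ (simple_inner_ne S j)]; module
          simp only [Function.comp_apply, this, wordAct_neg]
          exact isNeg_neg_of_isPos S (hpos j)
        obtain ⟨l₃, hl₃len, hl₃⟩ := key_shorten S (i :: l₂) j hneg2
        have hl₃w : S.wordAct l₃ = S.wordAct (i :: t) := by
          rw [hl₃, hw]
          funext y
          simp only [Function.comp_apply, reflFun_invol _ (simple_inner_ne S j)]
        have hlen3 : l₃.length ≤ L := by
          simp only [List.length_cons] at hl₃len hl hl₂len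
          omega
        have := ih l₃ hlen3 (by intro j'; rw [hl₃w]; exact hpos j') x
        rwa [hl₃w] at this

/-- uniqueness of the dominant representative -/
lemma dom_unique : ∀ L : ℕ, ∀ l : List ι, l.length ≤ L → ∀ v : E,
    (∀ i, 0 ≤ ⟪S.simple i, v⟫) → (∀ i, 0 ≤ ⟪S.simple i, S.wordAct l v⟫) →
    S.wordAct l v = v := by
  intro L
  induction L with
  | zero =>
    intro l hl v _ _
    rw [List.length_eq_zero_iff.1 (Nat.le_zero.1 hl)]
    rfl
  | succ L ih =>
    intro l hl v hv hwv
    by_cases hall : ∀ j, IsPos S (S.wordAct l (S.simple j))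
    · exact all_pos_id S (L + 1) l hl hall v
    · push_neg at hall
      obtain ⟨j, hj⟩ := hall
      have hneg : IsNeg S (S.wordAct l (S.simple j)) :=
        isNeg_of_not_isPos S (wordAct_mem_roots S l (S.simple_mem j)) hj
      -- show ⟪α_j, v⟫ = 0
      obtain ⟨c, hc⟩ := hneg
      have hinner1 : ⟪S.wordAct l (S.simple j), S.wordAct l v⟫ = ⟪S.simple j, v⟫ :=
        wordAct_inner S l _ _
      have hnonneg : (0:ℝ) ≤ ⟪∑ i, (c i : ℝ) • S.simple i, S.wordAct l v⟫ := by
        rw [sum_inner]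
        apply Finset.sum_nonneg
        intro i _
        rw [real_inner_smul_left]
        exact mul_nonneg (Nat.cast_nonneg _) (hwv i)
      have h2 : ⟪S.simple j, v⟫ ≤ 0 := by
        rw [← hinner1, hc, inner_neg_left]
        linarith
      have h0 : ⟪v, S.simple j⟫ = 0 := by
        rw [real_inner_comm]
        exact le_antisymm h2 (hv j)
      have hfix : reflFun (S.simple j) v = v := reflFun_fixed _ _ h0
      obtain ⟨l', hl'len, hl'⟩ := key_shorten S l j ⟨c, hc⟩
      have : S.wordAct l' v = S.wordAct l v := by
        rw [hl', Function.comp_apply, hfix]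
      rw [← this] at hwv ⊢
      exact ih l' (by omega) v hv hwv

end Aux4
section Aux5
variable {ι E : Type} [Fintype ι] [DecidableEq ι]
  [NormedAddCommGroup E] [InnerProductSpace ℝ E] (S : RootSystemCtx ι E)
  (θ : E ≃ₗᵢ[ℝ] E) (π : Equiv.Perm ι)

lemma theta_pow_simple (hθsimple : ∀ i, θ (S.simple i) = S.simple (π i)) :
    ∀ k : ℕ, ∀ i : ι, (θ ^ k) (S.simple i) = S.simple ((π ^ k) i) := by
  intro k
  induction k with
  | zero => intro i; simp
  | succ k ih =>
    intro i
    rw [pow_succ, pow_succ]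
    have h1 : (θ ^ k * θ) (S.simple i) = (θ ^ k) (θ (S.simple i)) := rfl
    have h2 : ((π ^ k) * π) i = (π ^ k) (π i) := rfl
    rw [h1, h2, hθsimple, ih]

lemma theta_pow_fixed {x : E} (hx : θ x = x) : ∀ k : ℕ, (θ ^ k) x = x := by
  intro k
  induction k with
  | zero => simp
  | succ k ih =>
    rw [pow_succ]
    have : (θ ^ k * θ) x = (θ ^ k) (θ x) := rfl
    rw [this, hx, ih]

lemma mem_orbit_self (i : ι) : i ∈ orbitOf π i := ⟨0, rfl⟩

lemma orbit_maps_pi {i j : ι} (hj : j ∈ orbitOf π i) : π j ∈ orbitOf π i := by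
  obtain ⟨k, hk⟩ := hj
  refine ⟨k + 1, ?_⟩
  rw [pow_succ', Equiv.Perm.mul_apply]
  exact congrArg π hk

lemma orbit_maps_pi_inv {i j : ι} (hj : j ∈ orbitOf π i) : π⁻¹ j ∈ orbitOf π i := by
  obtain ⟨k, hk⟩ := hj
  have ho : π ^ (orderOf π) = 1 := pow_orderOf_eq_one π
  have hopos : 0 < orderOf π := orderOf_pos π
  refine ⟨k + (orderOf π - 1), ?_⟩
  have : π ^ (k + (orderOf π - 1)) = π^(orderOf π - 1) * π ^ k := by
    rw [← pow_add]; ring_nf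
  rw [this, Equiv.Perm.mul_apply, hk]
  have hπinv : π ^ (orderOf π - 1) = π⁻¹ := by
    have h5 : π * π ^ (orderOf π - 1) = 1 := by
      rw [← pow_succ']
      have : orderOf π - 1 + 1 = orderOf π := by omega
      rw [this]
      exact ho
    exact eq_inv_of_mul_eq_one_right h5
  rw [hπinv]

/-- roots in the same θ-orbit are pairwise orthogonal -/
lemma orbit_orth (horth : ∀ i : ι, ∀ k : ℕ, S.simple ((π ^ k) i) ≠ S.simple i →
      (inner ℝ (S.simple i) (S.simple ((π ^ k) i)) : ℝ) = 0)
    {i j j' : ι} (hj : j ∈ orbitOf π i) (hj' : j' ∈ orbitOf π i) (hne : j ≠ j') :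
    ⟪S.simple j, S.simple j'⟫ = 0 := by
  obtain ⟨a, ha⟩ := hj
  obtain ⟨b, hb⟩ := hj'
  have hsne : S.simple j ≠ S.simple j' := fun h => hne (simple_injective S h)
  rcases le_total a b with hab | hab
  · have : (π ^ (b - a)) j = j' := by
      rw [← ha, ← hb, ← Equiv.Perm.mul_apply, ← pow_add]
      rw [show b - a + a = b by omega]
    have := horth j (b - a) (by rw [this]; exact hsne.symm)
    rw [‹(π ^ (b - a)) j = j'›] at this
    exact this
  · have hba : (π ^ (a - b)) j' = j := by
      rw [← ha, ← hb, ← Equiv.Perm.mul_apply, ← pow_add]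
      rw [show a - b + b = a by omega]
    have := horth j' (a - b) (by rw [hba]; exact hsne)
    rw [hba] at this
    rw [real_inner_comm]
    exact this

lemma orbit_inner_self (hθsimple : ∀ i, θ (S.simple i) = S.simple (π i))
    {i j : ι} (hj : j ∈ orbitOf π i) :
    (⟪S.simple j, S.simple j⟫ : ℝ) = ⟪S.simple i, S.simple i⟫ := by
  obtain ⟨k, hk⟩ := hj
  rw [← hk, ← theta_pow_simple S θ π hθsimple k i, LinearIsometryEquiv.inner_map_map]

lemma orbit_pairR_fixed (hθsimple : ∀ i, θ (S.simple i) = S.simple (π i))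
    {x : E} (hx : θ x = x) {i j : ι} (hj : j ∈ orbitOf π i) :
    pairR x (S.simple j) = pairR x (S.simple i) := by
  obtain ⟨k, hk⟩ := hj
  rw [pairR, pairR, ← hk, ← theta_pow_simple S θ π hθsimple k i,
    LinearIsometryEquiv.inner_map_map, ← theta_pow_fixed θ hx k,
    LinearIsometryEquiv.inner_map_map, theta_pow_fixed θ hx k]

lemma orbit_inner_fixed (hθsimple : ∀ i, θ (S.simple i) = S.simple (π i))
    {x : E} (hx : θ x = x) {i j : ι} (hj : j ∈ orbitOf π i) :
    ⟪S.simple j, x⟫ = ⟪S.simple i, x⟫ := by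
  obtain ⟨k, hk⟩ := hj
  rw [← hk, ← theta_pow_simple S θ π hθsimple k i, ← theta_pow_fixed θ hx k,
    LinearIsometryEquiv.inner_map_map, theta_pow_fixed θ hx k]

end Aux5
section Aux6
variable {ι E : Type} [Fintype ι] [DecidableEq ι]
  [NormedAddCommGroup E] [InnerProductSpace ℝ E] (S : RootSystemCtx ι E)

lemma simpleBasis_apply (i : ι) : S.simpleBasis i = S.simple i :=
  Module.Basis.mk_apply S.indep S.span_top.ge i

lemma exists_rho : ∃ ρ : E, ∀ i, ⟪ρ, S.simple i⟫ = 1 := by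
  haveI : FiniteDimensional ℝ E := Module.Finite.of_basis S.simpleBasis
  refine ⟨(InnerProductSpace.toDual ℝ E).symm
      (LinearMap.toContinuousLinearMap S.simpleBasis.sumCoords), fun i => ?_⟩
  rw [InnerProductSpace.toDual_symm_apply]
  have h1 : (LinearMap.toContinuousLinearMap S.simpleBasis.sumCoords) (S.simple i)
      = S.simpleBasis.sumCoords (S.simple i) := rfl
  rw [h1, ← simpleBasis_apply S i, Module.Basis.sumCoords_self_apply]

lemma weylOrbit_finite (ν : E) :
    Set.Finite {y : E | ∃ l : List ι, y = S.wordAct l ν} := by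
  apply Set.Finite.subset (Set.Finite.image
    (f := fun (g : ι → E) => ∑ i, S.simpleBasis.repr ν i • g i)
    (Set.Finite.pi (fun _ : ι => S.finite)))
  rintro y ⟨l, rfl⟩
  refine ⟨fun i => S.wordAct l (S.simple i), ?_, ?_⟩
  · intro i _
    exact wordAct_mem_roots S l (S.simple_mem i)
  · have hν : ν = ∑ i, S.simpleBasis.repr ν i • S.simple i := by
      conv_lhs => rw [← Module.Basis.sum_repr S.simpleBasis ν]
      refine Finset.sum_congr rfl fun i _ => ?_
      rw [simpleBasis_apply]
    show ∑ i, S.simpleBasis.repr ν i • S.wordAct l (S.simple i) = S.wordAct l ν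
    conv_rhs => rw [hν]
    rw [wordAct_sum]
    exact Finset.sum_congr rfl fun i _ => (wordAct_smul S l _ _).symm

lemma list_map_sum_toList {α : Type} [DecidableEq α] (t : Finset α) (f : α → E) :
    (t.toList.map f).sum = ∑ i ∈ t, f i := by
  rw [← Multiset.sum_coe, ← Multiset.map_coe, Finset.coe_toList]
  rfl

lemma pairR_listsum_zero (L : List ι) (j : ι)
    (h : ∀ k ∈ L, ⟪S.simple k, S.simple j⟫ = 0) (x : E) :
    pairR ((L.map (fun k => pairR x (S.simple k) • S.simple k)).sum) (S.simple j) = 0 := by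
  induction L with
  | nil => simp [pairR]
  | cons a L' ih =>
    simp only [List.map_cons, List.sum_cons, pairR_add_left, pairR_smul_left]
    have ha0 : pairR (S.simple a) (S.simple j) = 0 := by
      rw [pairR, h a (List.mem_cons_self)]
      simp
    rw [ha0, ih (fun k hk => h k (List.mem_cons_of_mem _ hk))]
    ring

/-- action of a word on pairwise-orthogonal simple roots -/
lemma wordAct_orthList (L : List ι) (hnd : L.Nodup)
    (horthL : ∀ j ∈ L, ∀ j' ∈ L, j ≠ j' → ⟪S.simple j, S.simple j'⟫ = 0) (x : E) :
    S.wordAct L x = x - (L.map (fun j => pairR x (S.simple j) • S.simple j)).sum := by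
  induction L with
  | nil => simp [wordAct_nil]
  | cons j L' ih =>
    have hnd' : L'.Nodup := (List.nodup_cons.1 hnd).2
    have hjL' : j ∉ L' := (List.nodup_cons.1 hnd).1
    have horth' : ∀ a ∈ L', ∀ b ∈ L', a ≠ b → ⟪S.simple a, S.simple b⟫ = 0 := by
      intro a ha b hb hab
      exact horthL a (List.mem_cons_of_mem _ ha) b (List.mem_cons_of_mem _ hb) hab
    rw [wordAct_cons, Function.comp_apply, ih hnd' horth', reflFun_def]
    have hps : pairR (x - (L'.map (fun k => pairR x (S.simple k) • S.simple k)).sum)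
        (S.simple j) = pairR x (S.simple j) := by
      rw [pairR_sub_left, pairR_listsum_zero S L' j (fun k hk => horthL k
        (List.mem_cons_of_mem _ hk) j List.mem_cons_self
        (fun h => hjL' (h ▸ hk)))]
      ring
    rw [hps, List.map_cons, List.sum_cons]
    abel

end Aux6
section Aux7
variable {ι E : Type} [Fintype ι] [DecidableEq ι]
  [NormedAddCommGroup E] [InnerProductSpace ℝ E] (S : RootSystemCtx ι E)
  (θ : E ≃ₗᵢ[ℝ] E) (π : Equiv.Perm ι)

/-- the orbit of `i` under `π`, as a Finset -/
noncomputable def orbF (i : ι) : Finset ι := (Set.toFinite (orbitOf π i)).toFinset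

lemma mem_orbF {i j : ι} : j ∈ orbF π i ↔ j ∈ orbitOf π i := Set.Finite.mem_toFinset _

lemma pairR_theta (x y : E) : pairR (θ x) (θ y) = pairR x y := by
  rw [pairR, pairR, LinearIsometryEquiv.inner_map_map, LinearIsometryEquiv.inner_map_map]

/-- the formula for the product of the commuting reflections in an orbit -/
lemma block_formula (horth : ∀ i : ι, ∀ k : ℕ, S.simple ((π ^ k) i) ≠ S.simple i →
      (inner ℝ (S.simple i) (S.simple ((π ^ k) i)) : ℝ) = 0) (i : ι) (x : E) :
    S.wordAct (orbF π i).toList x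
      = x - ∑ j ∈ orbF π i, pairR x (S.simple j) • S.simple j := by
  rw [wordAct_orthList S _ (Finset.nodup_toList _) ?_ x, list_map_sum_toList]
  intro a ha b hb hab
  exact orbit_orth S π horth (mem_orbF π |>.1 (Finset.mem_toList.1 ha))
    (mem_orbF π |>.1 (Finset.mem_toList.1 hb)) hab

lemma block_comm (horth : ∀ i : ι, ∀ k : ℕ, S.simple ((π ^ k) i) ≠ S.simple i →
      (inner ℝ (S.simple i) (S.simple ((π ^ k) i)) : ℝ) = 0) (hθsimple : ∀ i, θ (S.simple i) = S.simple (π i)) (i : ι) (x : E) :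
    θ (S.wordAct (orbF π i).toList x) = S.wordAct (orbF π i).toList (θ x) := by
  rw [block_formula S π horth, block_formula S π horth, LinearIsometryEquiv.map_sub]
  congr 1
  rw [map_sum]
  refine Finset.sum_bij (fun j _ => π j) ?_ ?_ ?_ ?_
  · intro a ha
    exact (mem_orbF π).2 (orbit_maps_pi π ((mem_orbF π).1 ha))
  · intro a _ b _ h
    exact π.injective h
  · intro b hb
    exact ⟨π⁻¹ b, (mem_orbF π).2 (orbit_maps_pi_inv π ((mem_orbF π).1 hb)),
      Equiv.apply_symm_apply π b⟩
  · intro a _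
    rw [LinearIsometryEquiv.map_smul, hθsimple]
    congr 1
    rw [← hθsimple, pairR_theta]

/-- dominant on orbit representatives plus θ-fixed implies dominant -/
lemma Gdom_of_Hdom (hθsimple : ∀ i, θ (S.simple i) = S.simple (π i)) (ℛ : Finset ι) (hℛ : ∀ j : ι, ∃! i, i ∈ ℛ ∧ j ∈ orbitOf π i)
    {x : E} (hx : θ x = x) (hH : ∀ i ∈ ℛ, 0 ≤ ⟪S.simple i, x⟫) :
    ∀ i, 0 ≤ ⟪S.simple i, x⟫ := by
  intro i
  obtain ⟨r, ⟨hr1, hr2⟩, _⟩ := hℛ i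
  rw [orbit_inner_fixed S θ π hθsimple hx hr2]
  exact hH r hr1

/-- a θ-fixed vector can be brought to the dominant chamber by a
θ-commuting Weyl group element -/
lemma exists_theta_dominantizer (horth : ∀ i : ι, ∀ k : ℕ, S.simple ((π ^ k) i) ≠ S.simple i →
      (inner ℝ (S.simple i) (S.simple ((π ^ k) i)) : ℝ) = 0) (hθsimple : ∀ i, θ (S.simple i) = S.simple (π i)) (ν : E) (hν : θ ν = ν) :
    ∃ l : List ι, (∀ x, θ (S.wordAct l x) = S.wordAct l (θ x)) ∧
      (∀ i, 0 ≤ ⟪S.simple i, S.wordAct l ν⟫) := by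
  obtain ⟨ρ, hρ⟩ := exists_rho S
  set O : Set E := {y | ∃ l : List ι,
    (∀ x, θ (S.wordAct l x) = S.wordAct l (θ x)) ∧ y = S.wordAct l ν} with hO
  have hOfin : O.Finite := by
    apply Set.Finite.subset (weylOrbit_finite S ν)
    rintro y ⟨l, _, rfl⟩
    exact ⟨l, rfl⟩
  have hOne : O.Nonempty := ⟨ν, [], fun x => rfl, rfl⟩
  obtain ⟨a, haO, hamax⟩ := Set.Finite.exists_maximalFor
    (fun y => ⟪ρ, y⟫) O hOfin hOne
  obtain ⟨l₀, hl₀comm, rfl⟩ := haO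
  refine ⟨l₀, hl₀comm, ?_⟩
  set a := S.wordAct l₀ ν with ha
  have haθ : θ a = a := by rw [ha, hl₀comm, hν]
  by_contra hnot
  push_neg at hnot
  obtain ⟨i, hi⟩ := hnot
  -- apply the block of the orbit of i
  set c := pairR a (S.simple i) with hc
  have hcneg : c < 0 := (pairR_neg_iff a _ (simple_inner_pos S i)).2 hi
  set b := S.wordAct ((orbF π i).toList ++ l₀) ν with hb
  have hbO : b ∈ O := by
    refine ⟨(orbF π i).toList ++ l₀, ?_, rfl⟩
    intro x
    rw [wordAct_append, Function.comp_apply, Function.comp_apply,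
      block_comm S θ π horth hθsimple, hl₀comm]
  have hbval : b = a - ∑ j ∈ orbF π i, pairR a (S.simple j) • S.simple j := by
    rw [hb, wordAct_append, Function.comp_apply, ← ha, block_formula S π horth]
  have hsum : ∑ j ∈ orbF π i, pairR a (S.simple j) • S.simple j
      = c • ∑ j ∈ orbF π i, S.simple j := by
    rw [Finset.smul_sum]
    refine Finset.sum_congr rfl fun j hj => ?_
    rw [orbit_pairR_fixed S θ π hθsimple haθ ((mem_orbF π).1 hj), hc]
  have hfb : ⟪ρ, b⟫ = ⟪ρ, a⟫ - c * (orbF π i).card := by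
    rw [hbval, hsum, inner_sub_right, real_inner_smul_right, inner_sum]
    have : ∑ j ∈ orbF π i, ⟪ρ, S.simple j⟫ = (orbF π i).card := by
      rw [Finset.sum_congr rfl fun j _ => hρ j]
      simp
    rw [this]
  have hcard : 0 < (orbF π i).card :=
    Finset.card_pos.2 ⟨i, (mem_orbF π).2 (mem_orbit_self π i)⟩
  have hlt : ⟪ρ, a⟫ < ⟪ρ, b⟫ := by
    rw [hfb]
    have : c * (orbF π i).card < 0 :=
      mul_neg_of_neg_of_pos hcneg (by exact_mod_cast hcard)
    linarith
  have := hamax hbO hlt.le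
  linarith

end Aux7
section Aux8
variable {ι E : Type} [Fintype ι] [DecidableEq ι]
  [NormedAddCommGroup E] [InnerProductSpace ℝ E] (S : RootSystemCtx ι E)
  (θ : E ≃ₗᵢ[ℝ] E) (π : Equiv.Perm ι)

lemma Ncoroot_eq_finset (i : ι) :
    Ncoroot S π i = ∑ j ∈ orbF π i, corootOf (S.simple j) := by
  have h : orbitOf π i = ↑(orbF π i) := (Set.Finite.coe_toFinset _).symm
  rw [Ncoroot, h, finsum_mem_coe_finset]

lemma univ_eq_biUnion (ℛ : Finset ι) (hℛ : ∀ j : ι, ∃! i, i ∈ ℛ ∧ j ∈ orbitOf π i) :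
    (Finset.univ : Finset ι) = ℛ.biUnion (fun r => orbF π r) := by
  ext j
  simp only [Finset.mem_univ, Finset.mem_biUnion, true_iff]
  obtain ⟨r, ⟨hr1, hr2⟩, _⟩ := hℛ j
  exact ⟨r, hr1, (mem_orbF π).2 hr2⟩

lemma sum_partition (ℛ : Finset ι) (hℛ : ∀ j : ι, ∃! i, i ∈ ℛ ∧ j ∈ orbitOf π i)
    (f : ι → E) : ∑ j, f j = ∑ r ∈ ℛ, ∑ j ∈ orbF π r, f j := by
  rw [show (Finset.univ : Finset ι) = ℛ.biUnion (fun r => orbF π r) from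
    univ_eq_biUnion π ℛ hℛ]
  apply Finset.sum_biUnion
  intro r hr r' hr' hne
  simp only [Function.onFun]
  rw [Finset.disjoint_left]
  intro j hj hj'
  exact hne (((hℛ j).unique ⟨hr, (mem_orbF π).1 hj⟩ ⟨hr', (mem_orbF π).1 hj'⟩).symm ▸ rfl)

lemma coeff_pi_invariant (hθsimple : ∀ i, θ (S.simple i) = S.simple (π i))
    (c : ι → ℝ) {x : E} (hx : θ x = x)
    (hval : x = ∑ i, c i • corootOf (S.simple i)) : ∀ j, c (π j) = c j := by
  set t : ι → ℝ := fun i => 2 / ⟪S.simple i, S.simple i⟫ with ht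
  have htpos : ∀ i, 0 < t i := fun i => by
    rw [ht]
    exact div_pos two_pos (simple_inner_pos S i)
  have htinv : ∀ j, t (π j) = t j := by
    intro j
    rw [ht]
    simp only
    rw [← hθsimple, LinearIsometryEquiv.inner_map_map]
  have hx1 : x = ∑ i, (c i * t i) • S.simple i := by
    rw [hval]
    refine Finset.sum_congr rfl fun i _ => ?_
    rw [corootOf, smul_smul]
  have hθx : θ x = ∑ i, (c (π⁻¹ i) * t (π⁻¹ i)) • S.simple i := by
    rw [hx1, map_sum]
    have hterm : ∀ i, θ ((c i * t i) • S.simple i) = (c i * t i) • S.simple (π i) := by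
      intro i
      rw [LinearIsometryEquiv.map_smul, hθsimple]
    rw [Finset.sum_congr rfl fun i _ => hterm i]
    have := Equiv.sum_comp (π⁻¹ : Equiv.Perm ι)
      (fun i => (c i * t i) • S.simple (π i))
    rw [← this]
    refine Finset.sum_congr rfl fun i _ => ?_
    simp [Equiv.Perm.inv_def]
  have hcoeff := coeff_unique S (a := fun i => c (π⁻¹ i) * t (π⁻¹ i))
    (b := fun i => c i * t i) (by rw [← hθx, hx, hx1])
  intro j
  have := congrFun hcoeff (π j)
  simp only [Equiv.Perm.inv_def, Equiv.symm_apply_apply] at this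
  have h2 : t (π j) = t j := htinv j
  have h3 : t j ≠ 0 := (htpos j).ne'
  rw [h2] at this
  exact mul_right_cancel₀ h3 this.symm

lemma coeff_orbit_const (hθsimple : ∀ i, θ (S.simple i) = S.simple (π i))
    (c : ι → ℝ) {x : E} (hx : θ x = x)
    (hval : x = ∑ i, c i • corootOf (S.simple i)) :
    ∀ r : ι, ∀ j ∈ orbitOf π r, c j = c r := by
  have hinv := coeff_pi_invariant S θ π hθsimple c hx hval
  intro r j hj
  obtain ⟨k, hk⟩ := hj
  rw [← hk]
  clear hk
  induction k with
  | zero => rfl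
  | succ k ih =>
    rw [pow_succ']
    have : (π * π ^ k) r = π ((π ^ k) r) := rfl
    rw [this, hinv]
    exact ih

end Aux8
/-- (folding) Let `μ ∈ Y = X^θ` be `G`-dominant. With
`𝒫(G,μ) = {ν ∈ X : ν_{G-dom} ≤_G μ}` and `𝒫(H,μ) = {ν ∈ Y : ν_{H-dom} ≤_H μ}`,
one has `𝒫(H,μ) = Y ∩ 𝒫(G,μ)`. The `G`- (resp. `H`-) dominant representative
of the `W`- (resp. `W_H`-) orbit of `ν` is expressed by an existential over
Weyl group elements (resp. `θ`-fixed Weyl group elements, i.e. those commuting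
with `θ`); this is equivalent since the dominant representative is unique. -/
theorem PH_eq_Y_inter_PG
    {ι E : Type} [Fintype ι] [DecidableEq ι]
    [NormedAddCommGroup E] [InnerProductSpace ℝ E]
    (S : RootSystemCtx ι E) (hSL : S.SimplyLaced)
    (X : AddSubgroup E)
    (hXcor : ∀ a ∈ S.Roots, corootOf a ∈ X)
    (hXint : ∀ a ∈ S.Roots, ∀ x ∈ X, ∃ m : ℤ, (inner ℝ a x : ℝ) = m)
    (θ : E ≃ₗᵢ[ℝ] E) (n : ℕ) (hn : 0 < n) (hθn : θ ^ n = 1)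
    (hθX : ∀ x ∈ X, θ x ∈ X)
    (π : Equiv.Perm ι) (hθsimple : ∀ i, θ (S.simple i) = S.simple (π i))
    (horth : ∀ i : ι, ∀ k : ℕ, S.simple ((π ^ k) i) ≠ S.simple i →
      (inner ℝ (S.simple i) (S.simple ((π ^ k) i)) : ℝ) = 0)
    (ℛ : Finset ι) (hℛ : ∀ j : ι, ∃! i, i ∈ ℛ ∧ j ∈ orbitOf π i)
    (μ : E) (hμX : μ ∈ X) (hμθ : θ μ = μ)
    (hμdom : ∀ i : ι, 0 ≤ (inner ℝ (S.simple i) μ : ℝ)) :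
    ∀ ν : E,
      ((ν ∈ X ∧ θ ν = ν) ∧
        ∃ w : E → E, S.InWeyl w ∧ (∀ x : E, θ (w x) = w (θ x)) ∧
          (∀ i ∈ ℛ, 0 ≤ (inner ℝ (S.simple i) (w ν) : ℝ)) ∧
          ∃ d : ι → ℕ, μ - w ν = ∑ i ∈ ℛ, (d i : ℝ) • Ncoroot S π i) ↔
      ((ν ∈ X ∧ θ ν = ν) ∧
        ∃ w : E → E, S.InWeyl w ∧
          (∀ i : ι, 0 ≤ (inner ℝ (S.simple i) (w ν) : ℝ)) ∧
          ∃ c : ι → ℕ, μ - w ν = ∑ i, (c i : ℝ) • corootOf (S.simple i)) := by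
  intro ν
  constructor
  · -- H-side implies G-side
    rintro ⟨hνY, w, hwW, hwcomm, hHdom, d, hd⟩
    have hwνθ : θ (w ν) = w ν := by rw [hwcomm, hνY.2]
    refine ⟨hνY, w, hwW, Gdom_of_Hdom S θ π hθsimple ℛ hℛ hwνθ hHdom, ?_⟩
    choose rep hrep using fun j => (hℛ j).exists
    refine ⟨fun j => d (rep j), ?_⟩
    rw [hd, sum_partition π ℛ hℛ (fun j => ((d (rep j) : ℝ)) • corootOf (S.simple j))]
    refine Finset.sum_congr rfl fun r hr => ?_
    rw [Ncoroot_eq_finset S π r, Finset.smul_sum]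
    refine Finset.sum_congr rfl fun j hj => ?_
    have hrepj : rep j = r := (hℛ j).unique (hrep j) ⟨hr, (mem_orbF π).1 hj⟩
    rw [hrepj]
  · -- G-side implies H-side
    rintro ⟨hνY, w, ⟨l, hl⟩, hGdom, cc, hc⟩
    obtain ⟨l₀, hl₀comm, hl₀dom⟩ :=
      exists_theta_dominantizer S θ π horth hθsimple ν hνY.2
    set a := S.wordAct l₀ ν with ha
    have hνa : S.wordAct l₀.reverse a = ν := wordAct_reverse S l₀ ν
    have hwν : w ν = S.wordAct (l ++ l₀.reverse) a := by
      rw [wordAct_append, Function.comp_apply, hνa, hl]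
    have heq : S.wordAct (l ++ l₀.reverse) a = a :=
      dom_unique S (l ++ l₀.reverse).length (l ++ l₀.reverse) le_rfl a hl₀dom
        (fun i => by rw [← hwν]; exact hGdom i)
    have hwa : w ν = a := by rw [hwν, heq]
    have haθ : θ a = a := by rw [ha, hl₀comm, hνY.2]
    have hsub : μ - a = ∑ i, (cc i : ℝ) • corootOf (S.simple i) := by
      rw [← hwa]
      exact hc
    have hsubθ : θ (μ - a) = μ - a := by
      rw [LinearIsometryEquiv.map_sub, hμθ, haθ]
    have horbconst := coeff_orbit_const S θ π hθsimple (fun i => (cc i : ℝ)) hsubθ hsub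
    refine ⟨hνY, S.wordAct l₀, ⟨l₀, rfl⟩, hl₀comm, fun i _ => hl₀dom i, cc, ?_⟩
    rw [← ha, hsub, sum_partition π ℛ hℛ (fun j => ((cc j : ℝ)) • corootOf (S.simple j))]
    refine Finset.sum_congr rfl fun r hr => ?_
    rw [Ncoroot_eq_finset S π r, Finset.smul_sum]
    refine Finset.sum_congr rfl fun j hj => ?_
    have := horbconst r j ((mem_orbF π).1 hj)
    rw [this]
end
end

section
/- Assume R is simply-laced. Let μ ∈ X be dominant and let β∨ be a positive coroot of the relative coroot system R' such that ρ(μ) − β∨ is dominant (its image in the σ-invariants of X⊗ℝ pairs nonnegatively with every simple root). Then there exists a positive coroot γ∨ of R such that ρ(γ∨) = β∨ and ⟨γ, μ⟩ ≥ 1. -/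
/-!
Common setup: an abstract reduced irreducible crystallographic root system `R`
inside a real inner ℝ product space `E`, with simple roots `α i` (`i : ι`) forming
a basis of `E`, Weyl group generated by the reflections in the roots
(equivalently, by the simple reflections), coroot pairing
`⟨x, a∨⟩ = 2 (x, a) / (a, a)`, weight lattice `P(R)`, root lattices `Q(R)`,
`Q(R_J)`, etc.
-/

open scoped BigOperators

noncomputable section

/-- the averaging map over `⟨σ⟩` (for `σ` of order dividing `n`), realizing
the identification of `Y ⊗ ℝ` (resp. `Y_M ⊗ ℝ`) with `σ`-invariants. -/
def avgOf {E : Type} [NormedAddCommGroup E] [InnerProductSpace ℝ E]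
    (σ : E ≃ₗᵢ[ℝ] E) (n : ℕ) (x : E) : E :=
  (n : ℝ)⁻¹ • ∑ k ∈ Finset.range n, (σ ^ k) x

/-- `𝔞_P`: the subspace of `σ`-invariant vectors annihilated by every simple
root `α_j`, `j ∈ J`. -/
def aPsub {ι E : Type} [Fintype ι] [DecidableEq ι]
    [NormedAddCommGroup E] [InnerProductSpace ℝ E]
    (S : RootSystemCtx ι E) (σ : E ≃ₗᵢ[ℝ] E) (J : Finset ι) : Submodule ℝ E where
  carrier := {v : E | σ v = v ∧ ∀ j ∈ J, (inner ℝ (S.simple j) v : ℝ) = 0}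
  add_mem' := by
    rintro a b ⟨ha1, ha2⟩ ⟨hb1, hb2⟩
    refine ⟨by rw [map_add, ha1, hb1], fun j hj => ?_⟩
    rw [inner_add_right, ha2 j hj, hb2 j hj, add_zero]
  zero_mem' := by
    refine ⟨map_zero σ, fun j hj => ?_⟩
    simp
  smul_mem' := by
    rintro c a ⟨ha1, ha2⟩
    refine ⟨by rw [map_smul, ha1], fun j hj => ?_⟩
    rw [inner_smul_right, ha2 j hj, mul_zero]

section AuxLemmas

variable {ι E : Type} [Fintype ι] [DecidableEq ι]
  [NormedAddCommGroup E] [InnerProductSpace ℝ E]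

lemma aux_refl_map (σ : E ≃ₗᵢ[ℝ] E) (a x : E) :
    σ (reflFun a x) = reflFun (σ a) (σ x) := by
  simp only [reflFun, pairR, map_sub, map_smul, LinearIsometryEquiv.inner_map_map]

lemma aux_refl_invol (a : E) (ha : (inner ℝ a a : ℝ) ≠ 0) (x : E) :
    reflFun a (reflFun a x) = x := by
  unfold reflFun pairR
  rw [inner_sub_left, real_inner_smul_left]
  have h : 2 * ((inner ℝ x a : ℝ) - 2 * (inner ℝ x a : ℝ) / (inner ℝ a a : ℝ) * (inner ℝ a a : ℝ))
      / (inner ℝ a a : ℝ) = -(2 * (inner ℝ x a : ℝ) / (inner ℝ a a : ℝ)) := by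
    field_simp
    ring
  rw [h, neg_smul, sub_neg_eq_add, sub_add_cancel]

lemma aux_inner_self_pos {a : E} (ha : a ≠ 0) : 0 < (inner ℝ a a : ℝ) :=
  lt_of_le_of_ne real_inner_self_nonneg (Ne.symm (inner_self_ne_zero.mpr ha))

lemma aux_pow_succ_apply (σ : E ≃ₗᵢ[ℝ] E) (k : ℕ) (x : E) :
    (σ ^ (k + 1)) x = σ ((σ ^ k) x) := by
  rw [pow_succ']; rfl

lemma aux_sigma_root (S : RootSystemCtx ι E) (σ : E ≃ₗᵢ[ℝ] E)
    (π : Equiv.Perm ι) (hσsimple : ∀ i, σ (S.simple i) = S.simple (π i)) :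
    ∀ N : ℕ, ∀ a : E, ∀ c : ι → ℕ, a ∈ S.Roots →
      a = ∑ i, (c i : ℝ) • S.simple i → (∑ i, c i) = N → σ a ∈ S.Roots := by
  intro N
  induction N using Nat.strong_induction_on with
  | _ N IH =>
  intro a c ha hsum hN
  by_cases hsimp : ∃ i, a = S.simple i
  · obtain ⟨i, rfl⟩ := hsimp
    rw [hσsimple]; exact S.simple_mem _
  · have ha0 : a ≠ 0 := S.ne_zero a ha
    have haa : 0 < (inner ℝ a a : ℝ) := aux_inner_self_pos ha0
    have hsum' : (inner ℝ a a : ℝ) = ∑ i, (c i : ℝ) * (inner ℝ (S.simple i) a : ℝ) := by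
      nth_rewrite 1 [hsum]
      rw [sum_inner]
      simp [real_inner_smul_left]
    have hexists : ∃ i, 0 < (c i : ℝ) * (inner ℝ (S.simple i) a : ℝ) := by
      by_contra h
      push_neg at h
      have : (inner ℝ a a : ℝ) ≤ 0 := hsum' ▸ Finset.sum_nonpos (fun i _ => h i)
      linarith
    obtain ⟨i, hi⟩ := hexists
    have hci : 0 < c i := by
      rcases Nat.eq_zero_or_pos (c i) with h | h
      · simp [h] at hi
      · exact h
    have hpos : 0 < (inner ℝ (S.simple i) a : ℝ) := by
      by_contra h
      push_neg at h
      have : (c i : ℝ) * (inner ℝ (S.simple i) a : ℝ) ≤ 0 :=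
        mul_nonpos_of_nonneg_of_nonpos (Nat.cast_nonneg _) h
      linarith
    have hαne : (inner ℝ (S.simple i) (S.simple i) : ℝ) ≠ 0 := by
      have : 0 < (inner ℝ (S.simple i) (S.simple i) : ℝ) :=
        aux_inner_self_pos (S.ne_zero _ (S.simple_mem i))
      linarith
    have hαα : 0 < (inner ℝ (S.simple i) (S.simple i) : ℝ) :=
      aux_inner_self_pos (S.ne_zero _ (S.simple_mem i))
    obtain ⟨z, hz⟩ := S.crystal a ha (S.simple i) (S.simple_mem i)
    have hiac : (inner ℝ a (S.simple i) : ℝ) = inner ℝ (S.simple i) a := real_inner_comm _ _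
    have hm_pos : 0 < pairR a (S.simple i) := by
      unfold pairR
      rw [hiac]
      exact div_pos (by linarith) hαα
    have hz1 : 1 ≤ z := by
      have h0 : (0 : ℝ) < z := hz ▸ hm_pos
      exact_mod_cast h0
    set m := pairR a (S.simple i) with hmdef
    have hb : reflFun (S.simple i) a ∈ S.Roots :=
      S.refl_stable a ha (S.simple i) (S.simple_mem i)
    set b := reflFun (S.simple i) a with hbdef
    have hbeq : b = a - m • S.simple i := rfl
    have hj : ∃ j, j ≠ i ∧ 0 < c j := by
      by_contra h
      push_neg at h
      have haeq : a = (c i : ℝ) • S.simple i := by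
        rw [hsum, Finset.sum_eq_single i]
        · intro j _ hji
          have : c j = 0 := Nat.le_zero.mp (h j hji)
          simp [this]
        · intro habs; exact absurd (Finset.mem_univ i) habs
      rcases S.reduced (S.simple i) (S.simple_mem i) (c i) (by rw [← haeq]; exact ha) with h1 | h1
      · exact hsimp ⟨i, by rw [haeq, h1, one_smul]⟩
      · have : (0:ℝ) ≤ (c i : ℝ) := Nat.cast_nonneg _
        rw [h1] at this; linarith
    obtain ⟨j, hji, hcj⟩ := hj
    have key : ∀ (d : ι → ℕ) (s : ℝ), b = s • ∑ k, (d k : ℝ) • S.simple k →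
        ∀ k, s * (d k : ℝ) = (c k : ℝ) - (if k = i then m else 0) := by
      intro d s hd k
      have h0 : ∑ k, ((c k : ℝ) - (if k = i then m else 0) - s * (d k : ℝ)) • S.simple k = 0 := by
        simp only [sub_smul, ite_smul, zero_smul, mul_smul]
        rw [Finset.sum_sub_distrib, Finset.sum_sub_distrib, ← hsum,
          Finset.sum_ite_eq' Finset.univ i (fun k => m • S.simple k)]
        simp only [Finset.mem_univ, if_true]
        rw [← Finset.smul_sum, ← hd, ← hbeq]
        abel
      have := Fintype.linearIndependent_iff.mp S.indep _ h0 k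
      linarith
    rcases S.pos_neg b hb with ⟨d, hd⟩ | ⟨d, hd⟩
    · -- b positive
      have hkey := key d 1 (by rw [one_smul]; exact hd)
      simp only [one_mul] at hkey
      have hmi : m = (c i : ℝ) - (d i : ℝ) := by
        have := hkey i
        rw [if_pos rfl] at this
        linarith
      have hm1 : (1:ℝ) ≤ m := by
        rw [hz]; exact_mod_cast hz1
      have hdsum : ((∑ k, d k : ℕ) : ℝ) = ((∑ k, c k : ℕ) : ℝ) - m := by
        push_cast
        have h1 : ∀ k, (d k : ℝ) = (c k : ℝ) - (if k = i then m else 0) := fun k => by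
          have := hkey k; linarith
        rw [Finset.sum_congr rfl (fun k _ => h1 k), Finset.sum_sub_distrib,
          Finset.sum_ite_eq' Finset.univ i (fun _ => m)]
        simp
      have hlt : (∑ k, d k) < N := by
        have hr : ((∑ k, d k : ℕ) : ℝ) < ((N : ℕ) : ℝ) := by
          rw [hdsum, ← hN]; push_cast; linarith
        exact_mod_cast hr
      have hσb := IH _ hlt b d hb hd rfl
      have hinv : reflFun (S.simple i) b = a := aux_refl_invol (S.simple i) hαne a
      rw [← hinv, aux_refl_map, hσsimple]
      exact S.refl_stable _ hσb _ (S.simple_mem (π i))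
    · -- b negative : contradiction
      exfalso
      have hkey := key d (-1) (by rw [neg_one_smul]; exact hd)
      have := hkey j
      simp only [if_neg hji] at this
      have hdj : (0:ℝ) ≤ (d j : ℝ) := Nat.cast_nonneg _
      have hcj' : (1:ℝ) ≤ (c j : ℝ) := by exact_mod_cast hcj
      linarith

lemma aux_sigma_posroot (S : RootSystemCtx ι E) (σ : E ≃ₗᵢ[ℝ] E)
    (π : Equiv.Perm ι) (hσsimple : ∀ i, σ (S.simple i) = S.simple (π i))
    (a : E) (h : S.IsPositiveRoot a) : S.IsPositiveRoot (σ a) := by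
  obtain ⟨ha, c, hc⟩ := h
  refine ⟨aux_sigma_root S σ π hσsimple _ a c ha hc rfl, ⟨fun j => c (π.symm j), ?_⟩⟩
  rw [hc, map_sum]
  simp only [map_smul, hσsimple]
  rw [← Equiv.sum_comp π (fun j => ((c (π.symm j) : ℝ)) • S.simple j)]
  simp

lemma aux_sigmapow_posroot (S : RootSystemCtx ι E) (σ : E ≃ₗᵢ[ℝ] E)
    (π : Equiv.Perm ι) (hσsimple : ∀ i, σ (S.simple i) = S.simple (π i))
    (k : ℕ) (a : E) (h : S.IsPositiveRoot a) : S.IsPositiveRoot ((σ ^ k) a) := by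
  induction k with
  | zero => simpa using h
  | succ k IHk =>
    rw [aux_pow_succ_apply]
    exact aux_sigma_posroot S σ π hσsimple _ IHk

lemma aux_sigmapow_inner (σ : E ≃ₗᵢ[ℝ] E) (k : ℕ) (x ν : E) (hν : σ ν = ν) :
    (inner ℝ ((σ ^ k) x) ν : ℝ) = inner ℝ x ν := by
  induction k with
  | zero => simp
  | succ k IHk =>
    rw [aux_pow_succ_apply, ← hν, LinearIsometryEquiv.inner_map_map, hν]
    exact IHk

lemma aux_avg_invariant (σ : E ≃ₗᵢ[ℝ] E) (n : ℕ) (hσn : σ ^ n = 1) (x : E) :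
    σ (avgOf σ n x) = avgOf σ n x := by
  unfold avgOf
  rw [map_smul, map_sum]
  congr 1
  calc ∑ k ∈ Finset.range n, σ ((σ ^ k) x)
      = ∑ k ∈ Finset.range n, (σ ^ (k + 1)) x :=
        Finset.sum_congr rfl (fun k _ => (aux_pow_succ_apply σ k x).symm)
    _ = ∑ k ∈ Finset.range n, (σ ^ k) x := by
        have h1 := Finset.sum_range_succ' (fun k => (σ ^ k) x) n
        have h2 := Finset.sum_range_succ (fun k => (σ ^ k) x) n
        have h3 : (σ ^ n) x = (σ ^ 0) x := by rw [hσn, pow_zero]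
        have h4 := h1.symm.trans h2
        simp only [h3] at h4
        exact add_right_cancel h4

lemma aux_avg_inner (σ : E ≃ₗᵢ[ℝ] E) (n : ℕ) (hn : 0 < n) (x ν : E) (hν : σ ν = ν) :
    (inner ℝ (avgOf σ n x) ν : ℝ) = inner ℝ x ν := by
  unfold avgOf
  rw [real_inner_smul_left, sum_inner,
    Finset.sum_congr rfl (fun k _ => aux_sigmapow_inner σ k x ν hν),
    Finset.sum_const, Finset.card_range, nsmul_eq_mul]
  have hn' : (n : ℝ) ≠ 0 := Nat.cast_ne_zero.mpr hn.ne'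
  field_simp

lemma aux_avg_sub (σ : E ≃ₗᵢ[ℝ] E) (n : ℕ) (x y : E) :
    avgOf σ n (x - y) = avgOf σ n x - avgOf σ n y := by
  unfold avgOf
  rw [← smul_sub, ← Finset.sum_sub_distrib]
  simp

lemma aux_corootOf_map (g : E ≃ₗᵢ[ℝ] E) (a : E) : corootOf (g a) = g (corootOf a) := by
  unfold corootOf
  rw [map_smul, LinearIsometryEquiv.inner_map_map]

end AuxLemmas

/-- (quasi-split, `R` simply-laced) Let `μ ∈ X` be dominant
and let `β∨ = ρ(γ₀∨)` be a positive coroot of the relative coroot system `R'`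
(`γ₀` a positive coroot of `R`) such that `ρ(μ) - β∨` is dominant, i.e. its
image `avg(μ - γ₀∨)` in the `σ`-invariants of `X ⊗ ℝ` pairs nonnegatively with
every simple root. Then there exists a positive coroot `γ∨` of `R` with
`ρ(γ∨) = β∨` (i.e. `γ∨ - γ₀∨ ∈ (1-σ)X`) and `⟨γ, μ⟩ ≥ 1`. -/
theorem exists_coroot_lifting_pairing_pos
    {ι E : Type} [Fintype ι] [DecidableEq ι]
    [NormedAddCommGroup E] [InnerProductSpace ℝ E]
    (S : RootSystemCtx ι E) (hSL : S.SimplyLaced)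
    (X : AddSubgroup E)
    (hXcor : ∀ a ∈ S.Roots, corootOf a ∈ X)
    (hXint : ∀ a ∈ S.Roots, ∀ x ∈ X, ∃ m : ℤ, (inner ℝ a x : ℝ) = m)
    (σ : E ≃ₗᵢ[ℝ] E) (n : ℕ) (hn : 0 < n) (hσn : σ ^ n = 1)
    (hσX : ∀ x ∈ X, σ x ∈ X)
    (π : Equiv.Perm ι) (hσsimple : ∀ i, σ (S.simple i) = S.simple (π i))
    (μ : E) (hμX : μ ∈ X) (hμdom : ∀ i : ι, 0 ≤ (inner ℝ (S.simple i) μ : ℝ))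
    (γ₀ : E) (hγ₀ : S.IsPositiveRoot γ₀)
    (hν'dom : ∀ i : ι, 0 ≤ (inner ℝ (S.simple i) (avgOf σ n (μ - corootOf γ₀)) : ℝ)) :
    ∃ γ : E, S.IsPositiveRoot γ ∧
      (∃ u ∈ X, corootOf γ - corootOf γ₀ = u - σ u) ∧
      1 ≤ (inner ℝ γ μ : ℝ) := by
  by_contra hcon
  push_neg at hcon
  set ν := avgOf σ n (μ - corootOf γ₀) with hνdef
  obtain ⟨hγ₀mem, c₀, hc₀⟩ := hγ₀
  have hγ₀0 : γ₀ ≠ 0 := S.ne_zero _ hγ₀mem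
  have hγγ : 0 < (inner ℝ γ₀ γ₀ : ℝ) := aux_inner_self_pos hγ₀0
  have hccpos : 0 < 2 / (inner ℝ γ₀ γ₀ : ℝ) := div_pos two_pos hγγ
  have hσpowX : ∀ j : ℕ, ∀ x ∈ X, (σ ^ j) x ∈ X := by
    intro j
    induction j with
    | zero => intro x hx; simpa using hx
    | succ j IHj =>
      intro x hx
      rw [aux_pow_succ_apply]
      exact hσX _ (IHj x hx)
  have hk_pos : ∀ k : ℕ, S.IsPositiveRoot ((σ ^ k) γ₀) := fun k =>
    aux_sigmapow_posroot S σ π hσsimple k γ₀ ⟨hγ₀mem, c₀, hc₀⟩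
  have hk_u : ∀ k : ℕ, ∃ u ∈ X, corootOf ((σ ^ k) γ₀) - corootOf γ₀ = u - σ u := by
    intro k
    refine ⟨-∑ j ∈ Finset.range k, (σ ^ j) (corootOf γ₀), ?_, ?_⟩
    · exact neg_mem (AddSubgroup.sum_mem X
        (fun j _ => hσpowX j _ (hXcor γ₀ hγ₀mem)))
    · rw [aux_corootOf_map]
      have hσf : σ (∑ j ∈ Finset.range k, (σ ^ j) (corootOf γ₀))
          = ∑ j ∈ Finset.range k, (σ ^ (j + 1)) (corootOf γ₀) := by
        rw [map_sum]
        exact Finset.sum_congr rfl (fun j _ => (aux_pow_succ_apply σ j _).symm)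
      rw [map_neg, hσf, sub_neg_eq_add, neg_add_eq_sub, ← Finset.sum_sub_distrib,
        Finset.sum_range_sub (fun j => (σ ^ j) (corootOf γ₀)) k]
      simp
  have hk_zero : ∀ k : ℕ, (inner ℝ ((σ ^ k) γ₀) μ : ℝ) = 0 := by
    intro k
    have hlt := hcon _ (hk_pos k) (hk_u k)
    obtain ⟨hmem, d, hdsum⟩ := hk_pos k
    obtain ⟨z, hz⟩ := hXint _ hmem μ hμX
    have hnn : 0 ≤ (inner ℝ ((σ ^ k) γ₀) μ : ℝ) := by
      rw [hdsum, sum_inner]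
      refine Finset.sum_nonneg (fun i _ => ?_)
      rw [real_inner_smul_left]
      exact mul_nonneg (Nat.cast_nonneg _) (hμdom i)
    rw [hz] at hlt hnn ⊢
    have h1 : z < 1 := by exact_mod_cast hlt
    have h2 : 0 ≤ z := by exact_mod_cast hnn
    have : z = 0 := by omega
    rw [this]; norm_num
  set A := avgOf σ n (corootOf γ₀) with hAdef
  have hAinv : σ A = A := aux_avg_invariant σ n hσn _
  have hνinv : σ ν = ν := aux_avg_invariant σ n hσn _
  have hcast : corootOf γ₀ = (2 / (inner ℝ γ₀ γ₀ : ℝ)) • γ₀ := rfl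
  have hAμ : (inner ℝ A μ : ℝ) = 0 := by
    rw [hAdef]
    unfold avgOf
    rw [real_inner_smul_left, sum_inner]
    have hterm : ∀ k ∈ Finset.range n, (inner ℝ ((σ ^ k) (corootOf γ₀)) μ : ℝ) = 0 := by
      intro k _
      rw [hcast, map_smul, real_inner_smul_left, hk_zero k, mul_zero]
    rw [Finset.sum_congr rfl hterm]
    simp
  have h1 : 0 ≤ (inner ℝ (corootOf γ₀) ν : ℝ) := by
    have hexp : corootOf γ₀ = ∑ i, ((2 / (inner ℝ γ₀ γ₀ : ℝ)) * (c₀ i : ℝ)) • S.simple i := by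
      rw [hcast, hc₀, Finset.smul_sum]
      exact Finset.sum_congr rfl (fun i _ => (mul_smul _ _ _).symm)
    rw [hexp, sum_inner]
    refine Finset.sum_nonneg (fun i _ => ?_)
    rw [real_inner_smul_left]
    exact mul_nonneg (mul_nonneg hccpos.le (Nat.cast_nonneg _)) (hν'dom i)
  have h2 : (inner ℝ (corootOf γ₀) ν : ℝ) = inner ℝ A ν :=
    (aux_avg_inner σ n hn (corootOf γ₀) ν hνinv).symm
  have hνBA : ν = avgOf σ n μ - A := by rw [hνdef, hAdef, aux_avg_sub]
  have h4 : (inner ℝ A (avgOf σ n μ) : ℝ) = 0 := by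
    rw [real_inner_comm, aux_avg_inner σ n hn μ A hAinv, real_inner_comm, hAμ]
  have h3 : (inner ℝ A ν : ℝ) = - (inner ℝ A A : ℝ) := by
    rw [hνBA, inner_sub_right, h4, zero_sub]
  have hAA : (inner ℝ A A : ℝ) ≤ 0 := by
    rw [h2, h3] at h1; linarith
  have hA0 : A = 0 :=
    inner_self_eq_zero.mp (le_antisymm hAA real_inner_self_nonneg)
  -- contradiction via sum of coordinates
  have hfA0 : S.simpleBasis.sumCoords A = 0 := by rw [hA0, map_zero]
  have hfsimple : ∀ i, S.simpleBasis.sumCoords (S.simple i) = 1 := by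
    intro i
    have : S.simple i = S.simpleBasis i := by
      rw [RootSystemCtx.simpleBasis, Module.Basis.mk_apply]
    rw [this, Module.Basis.sumCoords_self_apply]
  have hfpos : 0 < S.simpleBasis.sumCoords A := by
    rw [hAdef]
    unfold avgOf
    rw [map_smul, map_sum, smul_eq_mul]
    have hn' : (0:ℝ) < (n : ℝ)⁻¹ := by positivity
    refine mul_pos hn' (Finset.sum_pos (fun k _ => ?_) (Finset.nonempty_range_iff.mpr hn.ne'))
    obtain ⟨hmem, d, hd⟩ := hk_pos k
    have hne : (σ ^ k) γ₀ ≠ 0 := S.ne_zero _ hmem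
    have hfb : S.simpleBasis.sumCoords ((σ ^ k) γ₀) = ∑ i, (d i : ℝ) := by
      rw [hd, map_sum]
      refine Finset.sum_congr rfl (fun i _ => ?_)
      rw [map_smul, smul_eq_mul, hfsimple, mul_one]
    have hd1 : (1:ℝ) ≤ ∑ i, (d i : ℝ) := by
      have hdne : ∑ i, d i ≠ 0 := by
        intro h0
        apply hne
        rw [hd]
        have hz : ∀ i ∈ Finset.univ, ((d i : ℝ)) • S.simple i = 0 := by
          intro i _
          have : d i = 0 := by
            have := (Finset.sum_eq_zero_iff).mp h0 i (Finset.mem_univ i)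
            exact this
          simp [this]
        exact Finset.sum_eq_zero hz
      have h1n : 1 ≤ ∑ i, d i := Nat.one_le_iff_ne_zero.mpr hdne
      calc (1:ℝ) ≤ ((∑ i, d i : ℕ) : ℝ) := by exact_mod_cast h1n
        _ = ∑ i, (d i : ℝ) := by push_cast; rfl
    rw [hcast, map_smul, map_smul, smul_eq_mul, hfb]
    exact mul_pos hccpos (lt_of_lt_of_le one_pos hd1)
  linarith
end
end
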